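/- Let R be a commutative ring, let 0 → A → B →g→ C → 0 be a short exact sequence of R-modules, and let X →u→ Y →v→ Z → 0 be an exact sequence of R-modules (exact at Y and with v surjective). Form the commutative diagram of Hom-modules with exact rows and columns whose rows are 0 → Hom(Z,M) → Hom(Y,M) → Hom(X,M) (induced by v and u) for M = A, B, C, and whose columns are 0 → Hom(W,A) → Hom(W,B) → Hom(W,C) (induced by the maps of the short exact sequence) for W = Z, Y, X. Then the two cokernel complexes 0 → Cok(Hom(Z,g)) → Cok(Hom(Y,g)) → Cok(Hom(X,g)) → 0 and 0 → Cok(Hom(u,A)) → Cok(Hom(u,B)) → Cok(Hom(u,C)) → 0, with the induced maps, have isomorphic homology at each of the three positions: the kernel of the first map of one complex is isomorphic to the kernel of the first map of the other; the middle homologies (kernel of second map modulo image of first map) are isomorphic; and the cokernels of the second maps are isomorphic. -/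

import Mathlib

open LinearMap Submodule

section Helpers
variable {R : Type*} [CommRing R] {M N P : Type*} [AddCommGroup M] [Module R M]
  [AddCommGroup N] [Module R N] [AddCommGroup P] [Module R P]

noncomputable def equivOfSurjKerEq {H₁ H₂ : Type*} [AddCommGroup H₁] [Module R H₁]
    [AddCommGroup H₂] [Module R H₂] (q₁ : M →ₗ[R] H₁) (q₂ : M →ₗ[R] H₂)
    (h₁ : Function.Surjective q₁) (h₂ : Function.Surjective q₂)
    (hk : ker q₁ = ker q₂) : H₁ ≃ₗ[R] H₂ :=
  ((q₁.quotKerEquivOfSurjective h₁).symm.trans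
    (Submodule.quotEquivOfEq _ _ hk)).trans (q₂.quotKerEquivOfSurjective h₂)

theorem exists_comp_surj (v : M →ₗ[R] N) (hv : Function.Surjective v)
    (θ : M →ₗ[R] P) (h : ker v ≤ ker θ) :
    ∃ φ : N →ₗ[R] P, φ ∘ₗ v = θ := by
  refine ⟨((ker v).liftQ θ h) ∘ₗ (v.quotKerEquivOfSurjective hv).symm, ?_⟩
  ext y
  have : (v.quotKerEquivOfSurjective hv).symm (v y) = Submodule.Quotient.mk y := by
    apply (v.quotKerEquivOfSurjective hv).injective
    simp [LinearMap.quotKerEquivOfSurjective]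
  simp [this]

theorem exists_comp_inj (f : M →ₗ[R] N) (hf : Function.Injective f)
    (β : P →ₗ[R] N) (h : ∀ x, β x ∈ range f) :
    ∃ α : P →ₗ[R] M, f ∘ₗ α = β := by
  refine ⟨(LinearEquiv.ofInjective f hf).symm.toLinearMap ∘ₗ β.codRestrict (range f) h, ?_⟩
  ext x
  simp only [coe_comp, Function.comp_apply, LinearEquiv.coe_coe, codRestrict_apply]
  exact congrArg Subtype.val ((LinearEquiv.ofInjective f hf).apply_symm_apply ⟨β x, h x⟩)

theorem comp_cancel_surj (v : M →ₗ[R] N) (hv : Function.Surjective v)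
    {φ φ' : N →ₗ[R] P} (h : φ ∘ₗ v = φ' ∘ₗ v) : φ = φ' := by
  ext z; obtain ⟨y, rfl⟩ := hv z; exact DFunLike.congr_fun h y

theorem comp_cancel_inj (f : M →ₗ[R] N) (hf : Function.Injective f)
    {α α' : P →ₗ[R] M} (h : f ∘ₗ α = f ∘ₗ α') : α = α' := by
  ext x; exact hf (DFunLike.congr_fun h x)

end Helpers

set_option maxHeartbeats 2000000 in
theorem hom_cokernel_complexes {R : Type*} [CommRing R]
    {A B C X Y Z : Type*}
    [AddCommGroup A] [Module R A] [AddCommGroup B] [Module R B]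
    [AddCommGroup C] [Module R C] [AddCommGroup X] [Module R X]
    [AddCommGroup Y] [Module R Y] [AddCommGroup Z] [Module R Z]
    (f : A →ₗ[R] B) (g : B →ₗ[R] C)
    (hf : Function.Injective f) (hg : Function.Surjective g)
    (hfg : LinearMap.range f = LinearMap.ker g)
    (u : X →ₗ[R] Y) (v : Y →ₗ[R] Z)
    (hv : Function.Surjective v)
    (huv : LinearMap.range u = LinearMap.ker v)
    (Φ₁ : ((Z →ₗ[R] C) ⧸ LinearMap.range (LinearMap.llcomp (σ₁₂ := RingHom.id R) R Z B C g)) →ₗ[R]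
          ((Y →ₗ[R] C) ⧸ LinearMap.range (LinearMap.llcomp (σ₁₂ := RingHom.id R) R Y B C g)))
    (hΦ₁ : Φ₁ ∘ₗ (LinearMap.range (LinearMap.llcomp (σ₁₂ := RingHom.id R) R Z B C g)).mkQ =
      (LinearMap.range (LinearMap.llcomp (σ₁₂ := RingHom.id R) R Y B C g)).mkQ ∘ₗ LinearMap.lcomp R C v)
    (Φ₂ : ((Y →ₗ[R] C) ⧸ LinearMap.range (LinearMap.llcomp (σ₁₂ := RingHom.id R) R Y B C g)) →ₗ[R]
          ((X →ₗ[R] C) ⧸ LinearMap.range (LinearMap.llcomp (σ₁₂ := RingHom.id R) R X B C g)))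
    (hΦ₂ : Φ₂ ∘ₗ (LinearMap.range (LinearMap.llcomp (σ₁₂ := RingHom.id R) R Y B C g)).mkQ =
      (LinearMap.range (LinearMap.llcomp (σ₁₂ := RingHom.id R) R X B C g)).mkQ ∘ₗ LinearMap.lcomp R C u)
    (Ψ₁ : ((X →ₗ[R] A) ⧸ LinearMap.range (LinearMap.lcomp R A u)) →ₗ[R]
          ((X →ₗ[R] B) ⧸ LinearMap.range (LinearMap.lcomp R B u)))
    (hΨ₁ : Ψ₁ ∘ₗ (LinearMap.range (LinearMap.lcomp R A u)).mkQ =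
      (LinearMap.range (LinearMap.lcomp R B u)).mkQ ∘ₗ LinearMap.llcomp (σ₁₂ := RingHom.id R) R X A B f)
    (Ψ₂ : ((X →ₗ[R] B) ⧸ LinearMap.range (LinearMap.lcomp R B u)) →ₗ[R]
          ((X →ₗ[R] C) ⧸ LinearMap.range (LinearMap.lcomp R C u)))
    (hΨ₂ : Ψ₂ ∘ₗ (LinearMap.range (LinearMap.lcomp R B u)).mkQ =
      (LinearMap.range (LinearMap.lcomp R C u)).mkQ ∘ₗ LinearMap.llcomp (σ₁₂ := RingHom.id R) R X B C g) :
    Nonempty (↥(LinearMap.ker Φ₁) ≃ₗ[R] ↥(LinearMap.ker Ψ₁)) ∧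
    Nonempty (
      (↥(LinearMap.ker Φ₂) ⧸
        (LinearMap.range Φ₁).comap (LinearMap.ker Φ₂).subtype)
      ≃ₗ[R]
      (↥(LinearMap.ker Ψ₂) ⧸
        (LinearMap.range Ψ₁).comap (LinearMap.ker Ψ₂).subtype)) ∧
    Nonempty (
      (((X →ₗ[R] C) ⧸ LinearMap.range (LinearMap.llcomp (σ₁₂ := RingHom.id R) R X B C g)) ⧸
        LinearMap.range Φ₂)
      ≃ₗ[R]
      (((X →ₗ[R] C) ⧸ LinearMap.range (LinearMap.lcomp R C u)) ⧸
        LinearMap.range Ψ₂)) := by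
  have hvu : ∀ x, v (u x) = 0 := fun x =>
    mem_ker.mp (huv ▸ LinearMap.mem_range_self u x)
  have hgf : ∀ a, g (f a) = 0 := fun a =>
    mem_ker.mp (hfg ▸ LinearMap.mem_range_self f a)
  refine ⟨?_, ?_, ?_⟩
  · -- Position 1
    let P₀ : Submodule R ((Z →ₗ[R] C) × (Y →ₗ[R] B) × (X →ₗ[R] A)) :=
      { carrier := {p | p.1 ∘ₗ v = g ∘ₗ p.2.1 ∧ p.2.1 ∘ₗ u = f ∘ₗ p.2.2}
        add_mem' := fun ha hb => ⟨by
            simp only [Prod.fst_add, Prod.snd_add, add_comp, comp_add, ha.1, hb.1], by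
            simp only [Prod.fst_add, Prod.snd_add, add_comp, comp_add, ha.2, hb.2]⟩
        zero_mem' := by
          constructor <;> simp
        smul_mem' := fun c p hp => ⟨by
            simp only [Prod.smul_fst, Prod.smul_snd, smul_comp, comp_smul, hp.1], by
            simp only [Prod.smul_fst, Prod.smul_snd, smul_comp, comp_smul, hp.2]⟩ }
    have hm₁ : ∀ p : P₀,
        ((LinearMap.range (LinearMap.llcomp (σ₁₂ := RingHom.id R) R Z B C g)).mkQ ∘ₗ
          (LinearMap.fst R _ _) ∘ₗ P₀.subtype) p ∈ LinearMap.ker Φ₁ := by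
      rintro ⟨⟨φ, ψ, α⟩, h1, h2⟩
      simp only [mem_ker, coe_comp, Function.comp_apply, coe_subtype, Submodule.mkQ_apply,
        LinearMap.fst_apply, LinearMap.snd_apply]
      have e := DFunLike.congr_fun hΦ₁ φ
      simp only [coe_comp, Function.comp_apply, Submodule.mkQ_apply] at e
      rw [e, lcomp_apply', h1, Submodule.Quotient.mk_eq_zero]
      exact ⟨ψ, rfl⟩
    have hm₂ : ∀ p : P₀,
        ((LinearMap.range (LinearMap.lcomp R A u)).mkQ ∘ₗ
          ((LinearMap.snd R _ _) ∘ₗ (LinearMap.snd R _ _)) ∘ₗ P₀.subtype) p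
          ∈ LinearMap.ker Ψ₁ := by
      rintro ⟨⟨φ, ψ, α⟩, h1, h2⟩
      simp only [mem_ker, coe_comp, Function.comp_apply, coe_subtype, Submodule.mkQ_apply,
        LinearMap.fst_apply, LinearMap.snd_apply]
      have e := DFunLike.congr_fun hΨ₁ α
      simp only [coe_comp, Function.comp_apply, Submodule.mkQ_apply] at e
      rw [e, llcomp_apply', ← h2, Submodule.Quotient.mk_eq_zero]
      exact ⟨ψ, rfl⟩
    set q₁ : P₀ →ₗ[R] ↥(LinearMap.ker Φ₁) :=
      LinearMap.codRestrict _ _ hm₁ with hq₁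
    set q₂ : P₀ →ₗ[R] ↥(LinearMap.ker Ψ₁) :=
      LinearMap.codRestrict _ _ hm₂ with hq₂
    have hs₁ : Function.Surjective q₁ := by
      rintro ⟨w, hw⟩
      obtain ⟨φ, rfl⟩ := Submodule.mkQ_surjective _ w
      rw [mem_ker] at hw
      have e := DFunLike.congr_fun hΦ₁ φ
      simp only [coe_comp, Function.comp_apply, Submodule.mkQ_apply] at e hw
      rw [e, lcomp_apply', Submodule.Quotient.mk_eq_zero] at hw
      obtain ⟨ψ, hψ⟩ := hw
      rw [llcomp_apply'] at hψ
      have hmem : ∀ x, (ψ ∘ₗ u) x ∈ LinearMap.range f := by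
        intro x
        rw [hfg, mem_ker]
        have e2 : g (ψ (u x)) = φ (v (u x)) := DFunLike.congr_fun hψ (u x)
        simpa [hvu x] using e2
      obtain ⟨α, hα⟩ := exists_comp_inj f hf (ψ ∘ₗ u) hmem
      exact ⟨⟨(φ, ψ, α), hψ.symm, hα.symm⟩, Subtype.ext rfl⟩
    have hs₂ : Function.Surjective q₂ := by
      rintro ⟨w, hw⟩
      obtain ⟨α, rfl⟩ := Submodule.mkQ_surjective _ w
      rw [mem_ker] at hw
      have e := DFunLike.congr_fun hΨ₁ α
      simp only [coe_comp, Function.comp_apply, Submodule.mkQ_apply] at e hw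
      rw [e, llcomp_apply', Submodule.Quotient.mk_eq_zero] at hw
      obtain ⟨ψ, hψ⟩ := hw
      rw [lcomp_apply'] at hψ
      have hker' : LinearMap.ker v ≤ LinearMap.ker (g ∘ₗ ψ) := by
        rw [← huv]
        rintro _ ⟨x, rfl⟩
        rw [mem_ker]
        have e2 : ψ (u x) = f (α x) := DFunLike.congr_fun hψ x
        show g (ψ (u x)) = 0
        rw [e2, hgf]
      obtain ⟨φ, hφ⟩ := exists_comp_surj v hv (g ∘ₗ ψ) hker'
      exact ⟨⟨(φ, ψ, α), hφ, hψ⟩, Subtype.ext rfl⟩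
    have hker : LinearMap.ker q₁ = LinearMap.ker q₂ := by
      rw [hq₁, hq₂, LinearMap.ker_codRestrict, LinearMap.ker_codRestrict]
      ext p
      obtain ⟨⟨φ, ψ, α⟩, h1, h2⟩ := p
      simp only [mem_ker, coe_comp, Function.comp_apply, coe_subtype, Submodule.mkQ_apply,
        LinearMap.fst_apply, LinearMap.snd_apply, Submodule.Quotient.mk_eq_zero]
      constructor
      · rintro ⟨χ, hχ⟩
        rw [llcomp_apply'] at hχ
        have hmem : ∀ y, (ψ - χ ∘ₗ v) y ∈ LinearMap.range f := by
          intro y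
          rw [hfg, mem_ker]
          have e1 : φ (v y) = g (ψ y) := DFunLike.congr_fun h1 y
          have e2 : g (χ (v y)) = φ (v y) := DFunLike.congr_fun hχ (v y)
          show g (ψ y - χ (v y)) = 0
          rw [map_sub, e2, e1, sub_self]
        obtain ⟨δ, hδ⟩ := exists_comp_inj f hf (ψ - χ ∘ₗ v) hmem
        refine ⟨δ, ?_⟩
        rw [lcomp_apply']
        refine comp_cancel_inj f hf ?_
        ext x
        have e3 := DFunLike.congr_fun hδ (u x)
        simp only [coe_comp, Function.comp_apply, LinearMap.sub_apply] at e3 ⊢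
        rw [e3, hvu x, map_zero, sub_zero]
        exact DFunLike.congr_fun h2 x
      · rintro ⟨α', hα'⟩
        rw [lcomp_apply'] at hα'
        have hker' : LinearMap.ker v ≤ LinearMap.ker (ψ - f ∘ₗ α') := by
          rw [← huv]
          rintro _ ⟨x, rfl⟩
          rw [mem_ker]
          have e1 : ψ (u x) = f (α x) := DFunLike.congr_fun h2 x
          have e2 : α' (u x) = α x := DFunLike.congr_fun hα' x
          show ψ (u x) - f (α' (u x)) = 0
          rw [e1, e2, sub_self]
        obtain ⟨χ, hχ⟩ := exists_comp_surj v hv (ψ - f ∘ₗ α') hker'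
        refine ⟨χ, ?_⟩
        rw [llcomp_apply']
        refine comp_cancel_surj v hv ?_
        ext y
        have e3 := DFunLike.congr_fun hχ y
        simp only [coe_comp, Function.comp_apply, LinearMap.sub_apply] at e3 ⊢
        rw [e3, map_sub, hgf, sub_zero]
        exact (DFunLike.congr_fun h1 y).symm
    exact ⟨equivOfSurjKerEq q₁ q₂ hs₁ hs₂ hker⟩
  · -- Position 2
    let P₂ : Submodule R ((Y →ₗ[R] C) × (X →ₗ[R] B)) :=
      { carrier := {p | p.1 ∘ₗ u = g ∘ₗ p.2}
        add_mem' := fun ha hb => by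
          simp only [Set.mem_setOf_eq, Prod.fst_add, Prod.snd_add, add_comp, comp_add] at *
          rw [ha, hb]
        zero_mem' := by simp
        smul_mem' := fun c p hp => by
          simp only [Set.mem_setOf_eq, Prod.smul_fst, Prod.smul_snd, smul_comp, comp_smul] at *
          rw [hp] }
    have hm₁ : ∀ p : P₂,
        ((LinearMap.range (LinearMap.llcomp (σ₁₂ := RingHom.id R) R Y B C g)).mkQ ∘ₗ
          (LinearMap.fst R _ _) ∘ₗ P₂.subtype) p ∈ LinearMap.ker Φ₂ := by
      rintro ⟨⟨θ, β⟩, hp⟩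
      simp only [mem_ker, coe_comp, Function.comp_apply, coe_subtype, Submodule.mkQ_apply,
        LinearMap.fst_apply, LinearMap.snd_apply]
      have e := DFunLike.congr_fun hΦ₂ θ
      simp only [coe_comp, Function.comp_apply, Submodule.mkQ_apply] at e
      rw [e, lcomp_apply', hp, Submodule.Quotient.mk_eq_zero]
      exact ⟨β, rfl⟩
    have hm₂ : ∀ p : P₂,
        ((LinearMap.range (LinearMap.lcomp R B u)).mkQ ∘ₗ
          (LinearMap.snd R _ _) ∘ₗ P₂.subtype) p ∈ LinearMap.ker Ψ₂ := by
      rintro ⟨⟨θ, β⟩, hp⟩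
      simp only [mem_ker, coe_comp, Function.comp_apply, coe_subtype, Submodule.mkQ_apply,
        LinearMap.fst_apply, LinearMap.snd_apply]
      have e := DFunLike.congr_fun hΨ₂ β
      simp only [coe_comp, Function.comp_apply, Submodule.mkQ_apply] at e
      rw [e, llcomp_apply', ← hp, Submodule.Quotient.mk_eq_zero]
      exact ⟨θ, rfl⟩
    refine ⟨equivOfSurjKerEq
      (((LinearMap.range Φ₁).comap (LinearMap.ker Φ₂).subtype).mkQ ∘ₗ
        LinearMap.codRestrict _ _ hm₁)
      (((LinearMap.range Ψ₁).comap (LinearMap.ker Ψ₂).subtype).mkQ ∘ₗ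
        LinearMap.codRestrict _ _ hm₂) ?_ ?_ ?_⟩
    · rintro t
      obtain ⟨⟨w, hw⟩, rfl⟩ := Submodule.mkQ_surjective _ t
      obtain ⟨θ, rfl⟩ := Submodule.mkQ_surjective _ w
      rw [mem_ker] at hw
      have e := DFunLike.congr_fun hΦ₂ θ
      simp only [coe_comp, Function.comp_apply, Submodule.mkQ_apply] at e hw
      rw [e, lcomp_apply', Submodule.Quotient.mk_eq_zero] at hw
      obtain ⟨β, hβ⟩ := hw
      rw [llcomp_apply'] at hβ
      exact ⟨⟨(θ, β), hβ.symm⟩, congrArg _ (Subtype.ext rfl)⟩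
    · rintro t
      obtain ⟨⟨w, hw⟩, rfl⟩ := Submodule.mkQ_surjective _ t
      obtain ⟨β, rfl⟩ := Submodule.mkQ_surjective _ w
      rw [mem_ker] at hw
      have e := DFunLike.congr_fun hΨ₂ β
      simp only [coe_comp, Function.comp_apply, Submodule.mkQ_apply] at e hw
      rw [e, llcomp_apply', Submodule.Quotient.mk_eq_zero] at hw
      obtain ⟨θ, hθ⟩ := hw
      rw [lcomp_apply'] at hθ
      exact ⟨⟨(θ, β), hθ⟩, congrArg _ (Subtype.ext rfl)⟩
    · ext p
      obtain ⟨⟨θ, β⟩, hp⟩ := p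
      simp only [mem_ker, coe_comp, Function.comp_apply, Submodule.mkQ_apply,
        Submodule.Quotient.mk_eq_zero, Submodule.mem_comap, coe_subtype,
        LinearMap.codRestrict_apply, LinearMap.fst_apply, LinearMap.snd_apply]
      constructor
      · rintro ⟨t, ht⟩
        obtain ⟨φ, rfl⟩ := Submodule.mkQ_surjective _ t
        have e := DFunLike.congr_fun hΦ₁ φ
        simp only [coe_comp, Function.comp_apply, Submodule.mkQ_apply] at e ht
        rw [e, lcomp_apply', Submodule.Quotient.eq] at ht
        obtain ⟨ψ, hψ⟩ := ht
        rw [llcomp_apply'] at hψ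
        have hmem : ∀ x, (β + ψ ∘ₗ u) x ∈ LinearMap.range f := by
          intro x
          rw [hfg, mem_ker]
          show g (β x + ψ (u x)) = 0
          have e1 : θ (u x) = g (β x) := DFunLike.congr_fun hp x
          have e2 : g (ψ (u x)) = φ (v (u x)) - θ (u x) := DFunLike.congr_fun hψ (u x)
          rw [map_add, e2, hvu x, map_zero, ← e1, zero_sub, add_neg_cancel]
        obtain ⟨α, hα⟩ := exists_comp_inj f hf (β + ψ ∘ₗ u) hmem
        refine ⟨Submodule.Quotient.mk α, ?_⟩
        have e3 := DFunLike.congr_fun hΨ₁ α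
        simp only [coe_comp, Function.comp_apply, Submodule.mkQ_apply] at e3
        rw [e3, llcomp_apply', hα, Submodule.Quotient.eq]
        exact ⟨ψ, by rw [lcomp_apply']; abel⟩
      · rintro ⟨t, ht⟩
        obtain ⟨α, rfl⟩ := Submodule.mkQ_surjective _ t
        have e := DFunLike.congr_fun hΨ₁ α
        simp only [coe_comp, Function.comp_apply, Submodule.mkQ_apply] at e ht
        rw [e, llcomp_apply', Submodule.Quotient.eq] at ht
        obtain ⟨ψ, hψ⟩ := ht
        rw [lcomp_apply'] at hψ
        have hker' : LinearMap.ker v ≤ LinearMap.ker (θ + g ∘ₗ ψ) := by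
          rw [← huv]
          rintro _ ⟨x, rfl⟩
          rw [mem_ker]
          show θ (u x) + g (ψ (u x)) = 0
          have e1 : θ (u x) = g (β x) := DFunLike.congr_fun hp x
          have e2 : ψ (u x) = f (α x) - β x := DFunLike.congr_fun hψ x
          rw [e1, e2, map_sub, hgf, zero_sub, add_neg_cancel]
        obtain ⟨φ, hφ⟩ := exists_comp_surj v hv (θ + g ∘ₗ ψ) hker'
        refine ⟨Submodule.Quotient.mk φ, ?_⟩
        have e3 := DFunLike.congr_fun hΦ₁ φ
        simp only [coe_comp, Function.comp_apply, Submodule.mkQ_apply] at e3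
        rw [e3, lcomp_apply', hφ, Submodule.Quotient.eq]
        exact ⟨ψ, by rw [llcomp_apply']; abel⟩
  · -- Position 3
    refine ⟨equivOfSurjKerEq
      ((LinearMap.range Φ₂).mkQ ∘ₗ (LinearMap.range (LinearMap.llcomp (σ₁₂ := RingHom.id R) R X B C g)).mkQ)
      ((LinearMap.range Ψ₂).mkQ ∘ₗ (LinearMap.range (LinearMap.lcomp R C u)).mkQ)
      ?_ ?_ ?_⟩
    · exact (Submodule.mkQ_surjective _).comp (Submodule.mkQ_surjective _)
    · exact (Submodule.mkQ_surjective _).comp (Submodule.mkQ_surjective _)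
    · have r1 : LinearMap.range Φ₂ =
          Submodule.map (LinearMap.range (LinearMap.llcomp (σ₁₂ := RingHom.id R) R X B C g)).mkQ
            (LinearMap.range (LinearMap.lcomp R C u)) := by
        have h0 : LinearMap.range Φ₂ = LinearMap.range (Φ₂ ∘ₗ
            (LinearMap.range (LinearMap.llcomp (σ₁₂ := RingHom.id R) R Y B C g)).mkQ) := by
          rw [LinearMap.range_comp, Submodule.range_mkQ, Submodule.map_top]
        rw [h0, hΦ₂, LinearMap.range_comp]
      have r2 : LinearMap.range Ψ₂ =
          Submodule.map (LinearMap.range (LinearMap.lcomp R C u)).mkQ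
            (LinearMap.range (LinearMap.llcomp (σ₁₂ := RingHom.id R) R X B C g)) := by
        have h0 : LinearMap.range Ψ₂ = LinearMap.range (Ψ₂ ∘ₗ
            (LinearMap.range (LinearMap.lcomp R B u)).mkQ) := by
          rw [LinearMap.range_comp, Submodule.range_mkQ, Submodule.map_top]
        rw [h0, hΨ₂, LinearMap.range_comp]
      rw [LinearMap.ker_comp, LinearMap.ker_comp, Submodule.ker_mkQ, Submodule.ker_mkQ,
        r1, r2, Submodule.comap_map_eq, Submodule.comap_map_eq, Submodule.ker_mkQ,
        Submodule.ker_mkQ, sup_comm]
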